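/- arXiv:2605.09246 — 8 statements merged into one kernel-verified Lean document; each statement's English description precedes it below -/
import Mathlib

section
/- Let 2k < n ≤ tk with t ≥ 2 a real (or integer) parameter, and set h(n,k) = C(n-1,k-1) - C(n-k-1,k-1) + 1. Then h(n,k)^2 / C(n-1,k-1)^2 > 1 - 2((2t-3)/(2t-1))^(k-1). -/
set_option maxHeartbeats 1000000

open Finset in
theorem stmt_1 (n k : ℕ) (t : ℝ) (ht : 2 ≤ t) (hk : 2 ≤ k)
    (h1 : 2 * k < n) (h2 : (n : ℝ) ≤ t * k) :
    (((n - 1).choose (k - 1) - (n - k - 1).choose (k - 1) + 1 : ℕ) : ℝ) ^ 2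
        / ((n - 1).choose (k - 1) : ℝ) ^ 2
      > 1 - 2 * ((2 * t - 3) / (2 * t - 1)) ^ (k - 1) := by
  have hnR : (2 * k + 1 : ℝ) ≤ n := by exact_mod_cast (show (2*k+1 : ℕ) ≤ n by omega)
  have hkR : (2:ℝ) ≤ k := by exact_mod_cast hk
  set K := k - 1 with hKdef
  set A := (n-1).choose K with hAdef
  set B := (n-k-1).choose K with hBdef
  -- cast of descFactorial as real product
  have hcast : ∀ m : ℕ, K ≤ m →
      ((m.descFactorial K : ℕ):ℝ) = ∏ i ∈ range K, ((m:ℝ) - i) := by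
    intro m hm
    rw [Nat.descFactorial_eq_prod_range, Nat.cast_prod]
    refine Finset.prod_congr rfl fun i hi => ?_
    have hi' : i < K := Finset.mem_range.mp hi
    rw [Nat.cast_sub (by omega)]
  have e1 : ((n - 1 : ℕ):ℝ) = (n:ℝ) - 1 := by
    rw [Nat.cast_sub (by omega)]; norm_num
  have e2 : ((n - k - 1 : ℕ):ℝ) = (n:ℝ) - k - 1 := by
    rw [show n - k - 1 = n - (k+1) from by omega, Nat.cast_sub (by omega)]
    push_cast; ring
  set c : ℝ := 2 * (n:ℝ) - k with hcdef
  set d : ℝ := 2 * (n:ℝ) - 3*k with hddef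
  have hc0 : 0 < c := by rw [hcdef]; nlinarith
  have hd0 : 0 < d := by rw [hddef]; nlinarith
  have hdB : ((n-k-1).descFactorial K : ℝ) = ∏ i ∈ range K, ((n:ℝ) - k - 1 - i) := by
    rw [hcast _ (by omega)]
    exact Finset.prod_congr rfl fun i hi => by rw [e2]
  have hdA : ((n-1).descFactorial K : ℝ) = ∏ i ∈ range K, ((n:ℝ) - 1 - i) := by
    rw [hcast _ (by omega)]
    exact Finset.prod_congr rfl fun i hi => by rw [e1]
  have sq_eq : ∀ (f : ℕ → ℝ) (u : ℝ),
      ((∏ i ∈ range K, f i) * u ^ K) ^ 2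
        = ∏ i ∈ range K, (f i * f (K - 1 - i) * u ^ 2) := by
    intro f u
    rw [mul_pow, sq (∏ i ∈ range K, f i)]
    nth_rewrite 2 [← Finset.prod_range_reflect f K]
    rw [← pow_mul, mul_comm K 2, pow_mul,
      show (u^2)^K = ∏ _i ∈ range K, u^2 by rw [Finset.prod_const, Finset.card_range],
      ← Finset.prod_mul_distrib, ← Finset.prod_mul_distrib]
  have key_sq : ((∏ i ∈ range K, ((n:ℝ) - k - 1 - i)) * c ^ K) ^ 2
      ≤ ((∏ i ∈ range K, ((n:ℝ) - 1 - i)) * d ^ K) ^ 2 := by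
    rw [sq_eq, sq_eq]
    refine Finset.prod_le_prod (fun i hi => ?_) (fun i hi => ?_)
    · have hi' : (i:ℝ) ≤ (k:ℝ) - 2 := by
        have : i ≤ k - 2 := by have := Finset.mem_range.mp hi; omega
        calc (i:ℝ) ≤ ((k-2 : ℕ):ℝ) := by exact_mod_cast this
        _ = (k:ℝ) - 2 := by rw [Nat.cast_sub (by omega)]; norm_num
      have hj' : ((K - 1 - i : ℕ):ℝ) ≤ (k:ℝ) - 2 := by
        have : K - 1 - i ≤ k - 2 := by omega
        calc ((K-1-i : ℕ):ℝ) ≤ ((k-2 : ℕ):ℝ) := by exact_mod_cast this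
        _ = (k:ℝ) - 2 := by rw [Nat.cast_sub (by omega)]; norm_num
      have h3 : (0:ℝ) ≤ (n:ℝ) - k - 1 - i := by nlinarith
      have h4 : (0:ℝ) ≤ (n:ℝ) - k - 1 - ((K - 1 - i : ℕ):ℝ) := by nlinarith
      positivity
    · have himem := Finset.mem_range.mp hi
      have hij : (i:ℝ) + ((K - 1 - i : ℕ):ℝ) = (k:ℝ) - 2 := by
        have hh : i + (K - 1 - i) + 2 = k := by omega
        have := congrArg (Nat.cast : ℕ → ℝ) hh
        push_cast at this; linarith
      have hi' : (i:ℝ) ≤ (k:ℝ) - 2 := by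
        have h0 : (0:ℝ) ≤ ((K - 1 - i : ℕ):ℝ) := Nat.cast_nonneg _
        linarith
      set jr : ℝ := ((K - 1 - i : ℕ):ℝ) with hjr
      have hj' : jr = (k:ℝ) - 2 - i := by rw [hjr]; linarith
      rw [hj']
      have hint : (0:ℝ) ≤ (k:ℝ) * (2*(n:ℝ) - 2*k) * ((k:ℝ) - 2 - 2*i)^2 := by
        have hk0 : (0:ℝ) ≤ (k:ℝ) := by linarith
        have hs0 : (0:ℝ) ≤ 2*(n:ℝ) - 2*k := by nlinarith
        positivity
      rw [hcdef, hddef]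
      have hid : ((n:ℝ) - 1 - i) * ((n:ℝ) - 1 - ((k:ℝ) - 2 - i)) * (2*(n:ℝ) - 3*k)^2
          - ((n:ℝ) - k - 1 - i) * ((n:ℝ) - k - 1 - ((k:ℝ) - 2 - i)) * (2*(n:ℝ) - k)^2
          = (k:ℝ) * (2*(n:ℝ) - 2*k) * ((k:ℝ) - 2 - 2*i)^2 := by ring
      linarith [hint, hid]
  -- unsquare
  have h0L : (0:ℝ) ≤ (∏ i ∈ range K, ((n:ℝ) - k - 1 - i)) * c ^ K := by
    rw [← hdB]
    exact mul_nonneg (Nat.cast_nonneg _) (pow_nonneg hc0.le _)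
  have h0R : (0:ℝ) ≤ (∏ i ∈ range K, ((n:ℝ) - 1 - i)) * d ^ K := by
    rw [← hdA]
    exact mul_nonneg (Nat.cast_nonneg _) (pow_nonneg hd0.le _)
  have key : ((n-k-1).descFactorial K : ℝ) * c ^ K ≤ ((n-1).descFactorial K : ℝ) * d ^ K := by
    rw [hdB, hdA]
    exact (pow_le_pow_iff_left₀ h0L h0R two_ne_zero).mp key_sq
  -- from descFactorial to choose
  have hf : (0:ℝ) < (K.factorial : ℝ) := by exact_mod_cast K.factorial_pos
  have hfB : ((n-k-1).descFactorial K : ℝ) = (K.factorial : ℝ) * B := by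
    rw [hBdef, Nat.descFactorial_eq_factorial_mul_choose]; push_cast; ring
  have hfA : ((n-1).descFactorial K : ℝ) = (K.factorial : ℝ) * A := by
    rw [hAdef, Nat.descFactorial_eq_factorial_mul_choose]; push_cast; ring
  rw [hfB, hfA] at key
  have hchoose : (B : ℝ) * c ^ K ≤ (A : ℝ) * d ^ K := by
    have h' : (K.factorial:ℝ) * ((B:ℝ) * c ^ K) ≤ (K.factorial:ℝ) * ((A:ℝ) * d ^ K) := by
      rw [← mul_assoc, ← mul_assoc]; exact key
    exact le_of_mul_le_mul_left h' hf
  set ρ : ℝ := (2*t - 3)/(2*t - 1) with hρdef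
  have ht1 : (0:ℝ) < 2*t - 1 := by linarith
  have hρ0 : 0 ≤ ρ := by
    rw [hρdef]; apply div_nonneg <;> linarith
  have hdc : d / c ≤ ρ := by
    rw [hρdef, div_le_div_iff₀ hc0 ht1, hcdef, hddef]
    have hid2 : (2*t - 3) * (2*(n:ℝ) - k) - (2*(n:ℝ) - 3*k) * (2*t - 1) = 4*(t*k - n) := by ring
    linarith [h2, hid2]
  have hBA : (B : ℝ) ≤ (A : ℝ) * ρ ^ K := by
    have h3 : (B:ℝ) ≤ (A:ℝ) * (d/c) ^ K := by
      rw [div_pow, ← mul_div_assoc, le_div_iff₀ (pow_pos hc0 K)]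
      exact hchoose
    calc (B:ℝ) ≤ (A:ℝ) * (d/c) ^ K := h3
    _ ≤ (A:ℝ) * ρ ^ K := by
        apply mul_le_mul_of_nonneg_left _ (Nat.cast_nonneg _)
        exact pow_le_pow_left₀ (div_nonneg hd0.le hc0.le) hdc K
  have hBAn : B ≤ A := Nat.choose_le_choose _ (by omega)
  have hApos : 0 < A := by
    rw [hAdef]
    exact Nat.choose_pos (by omega)
  have hApR : (0:ℝ) < (A:ℝ) := by exact_mod_cast hApos
  have hcastAB : ((A - B + 1 : ℕ):ℝ) = (A:ℝ) - B + 1 := by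
    rw [Nat.cast_add, Nat.cast_sub hBAn]; norm_num
  rw [gt_iff_lt, lt_div_iff₀ (by positivity)]
  rw [hcastAB]
  have hB0 : (0:ℝ) ≤ B := Nat.cast_nonneg _
  have hBAr : (B:ℝ) ≤ A := by exact_mod_cast hBAn
  nlinarith [sq_nonneg ((A:ℝ) - B), mul_le_mul_of_nonneg_left hBA (by linarith : (0:ℝ) ≤ 2*(A:ℝ))]
end

section
/- Let 2k < n ≤ tk. Then C(n-k-1,k-1)/C(n-1,k-1) ≤ ((2t-3)/(2t-1))^(k-1). -/
open Finset
set_option maxHeartbeats 1000000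

theorem stmt_2 (n k : ℕ) (t : ℝ) (hk : 1 ≤ k) (h1 : 2 * k < n) (h2 : (n : ℝ) ≤ t * k) :
    ((n - k - 1).choose (k - 1) : ℝ) / ((n - 1).choose (k - 1) : ℝ)
      ≤ ((2 * t - 3) / (2 * t - 1)) ^ (k - 1) := by
  have hkR : (1:ℝ) ≤ (k:ℝ) := by exact_mod_cast hk
  have hnR : 2*(k:ℝ) + 1 ≤ (n:ℝ) := by exact_mod_cast h1
  set N := (n:ℝ) with hN
  set K := (k:ℝ) with hK
  have ht : 2 < t := by nlinarith
  set c : ℝ := (2*N - 3*K)/(2*N - K) with hc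
  have hden : 0 < 2*N - K := by nlinarith
  have hnum : 0 < 2*N - 3*K := by nlinarith
  have hc0 : 0 ≤ c := le_of_lt (div_pos hnum hden)
  have hc1 : c ≤ (2*t-3)/(2*t-1) := by
    rw [div_le_div_iff₀ hden (by linarith)]
    nlinarith
  set r := k - 1 with hr
  set g : ℕ → ℝ := fun i => (N - K - 1 - i)/(N - 1 - i) with hg
  -- positivity facts for i < r
  have hgpos : ∀ i ∈ range r, 0 < N - K - 1 - i ∧ 0 < N - 1 - i := by
    intro i hi
    simp only [mem_range] at hi
    have : (i:ℝ) ≤ K - 2 := by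
      have : i + 2 ≤ k := by omega
      have := (Nat.cast_le (α := ℝ)).2 this
      push_cast at this; linarith
    constructor <;> nlinarith
  -- express the choose ratio as a product
  have hra : r ≤ n - k - 1 := by omega
  have hrb : r ≤ n - 1 := by omega
  have hprod : ((n - k - 1).choose r : ℝ) / ((n - 1).choose r : ℝ)
      = ∏ i ∈ range r, g i := by
    have e1 : (r.factorial : ℝ) * ((n - k - 1).choose r : ℝ)
        = ((n - k - 1).descFactorial r : ℝ) := by
      rw [Nat.descFactorial_eq_factorial_mul_choose]; push_cast; ring
    have e2 : (r.factorial : ℝ) * ((n - 1).choose r : ℝ)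
        = ((n - 1).descFactorial r : ℝ) := by
      rw [Nat.descFactorial_eq_factorial_mul_choose]; push_cast; ring
    have hf : (r.factorial : ℝ) ≠ 0 := by positivity
    have : ((n - k - 1).choose r : ℝ) / ((n - 1).choose r : ℝ)
        = ((n - k - 1).descFactorial r : ℝ) / ((n - 1).descFactorial r : ℝ) := by
      rw [← e1, ← e2, mul_div_mul_left _ _ hf]
    rw [this, Nat.descFactorial_eq_prod_range, Nat.descFactorial_eq_prod_range]
    push_cast
    rw [← prod_div_distrib]
    refine prod_congr rfl ?_
    intro i hi
    simp only [mem_range] at hi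
    have hia : i ≤ n - k - 1 := by omega
    have hib : i ≤ n - 1 := by omega
    rw [Nat.cast_sub hia, Nat.cast_sub hib]
    have h1' : ((n - k - 1 : ℕ) : ℝ) = N - K - 1 := by
      have : k + 1 ≤ n := by omega
      push_cast [Nat.sub_sub, Nat.cast_sub this]; ring
    have h2' : ((n - 1 : ℕ) : ℝ) = N - 1 := by
      have : 1 ≤ n := by omega
      push_cast [Nat.cast_sub this]; ring
    rw [h1', h2']
  rw [hprod]
  -- key pairwise bound
  have hpair : ∀ i ∈ range r, g i * g (r - 1 - i) ≤ c ^ 2 := by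
    intro i hi
    simp only [mem_range] at hi
    have hik : (i:ℝ) ≤ K - 2 := by
      have : i + 2 ≤ k := by omega
      have := (Nat.cast_le (α := ℝ)).2 this
      push_cast at this; linarith
    have hcast : ((r - 1 - i : ℕ) : ℝ) = K - 2 - i := by
      have h3 : r - 1 - i = k - 2 - i := by omega
      have h4 : i + 2 ≤ k := by omega
      rw [h3]
      have : k - 2 - i = k - (2 + i) := by omega
      rw [this, Nat.cast_sub (by omega)]
      push_cast; ring
    have hd1 : 0 < N - 1 - i := by nlinarith
    have hd2 : 0 < N - 1 - (K - 2 - i) := by nlinarith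
    have hn1 : 0 < N - K - 1 - i := by nlinarith
    have hn2 : 0 < N - K - 1 - (K - 2 - i) := by nlinarith
    simp only [hg, hcast]
    rw [div_mul_div_comm, hc, div_pow,
      div_le_div_iff₀ (by positivity) (by positivity)]
    nlinarith [mul_nonneg (mul_nonneg (by linarith : (0:ℝ) ≤ K)
      (by nlinarith : (0:ℝ) ≤ N - K)) (sq_nonneg (K - 2 - 2*i)), sq_nonneg (K - 2 - 2*i)]
  have hgnn : ∀ i ∈ range r, 0 ≤ g i := by
    intro i hi
    obtain ⟨ha, hb⟩ := hgpos i hi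
    exact le_of_lt (div_pos ha hb)
  have hP0 : 0 ≤ ∏ i ∈ range r, g i := prod_nonneg hgnn
  have hsq : (∏ i ∈ range r, g i) ^ 2 ≤ (c ^ r) ^ 2 := by
    have hrefl : ∏ i ∈ range r, g (r - 1 - i) = ∏ i ∈ range r, g i :=
      prod_range_reflect g r
    calc (∏ i ∈ range r, g i) ^ 2
        = ∏ i ∈ range r, (g i * g (r - 1 - i)) := by
          rw [prod_mul_distrib, hrefl, sq]
      _ ≤ ∏ i ∈ range r, c ^ 2 := by
          refine prod_le_prod ?_ hpair
          intro i hi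
          have h1' := hgnn i hi
          have h2' : 0 ≤ g (r - 1 - i) := by
            refine hgnn _ ?_
            simp only [mem_range] at hi ⊢
            omega
          exact mul_nonneg h1' h2'
      _ = (c ^ r) ^ 2 := by rw [prod_const, card_range, ← pow_mul, ← pow_mul, Nat.mul_comm]
  have hle : (∏ i ∈ range r, g i) ≤ c ^ r :=
    (pow_le_pow_iff_left₀ hP0 (pow_nonneg hc0 r) two_ne_zero).mp hsq
  calc (∏ i ∈ range r, g i) ≤ c ^ r := hle
    _ ≤ ((2 * t - 3) / (2 * t - 1)) ^ r := pow_le_pow_left₀ hc0 hc1 r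
end

section
/- For integers n, k, j with 1 ≤ j ≤ k-1 and n > 2k, we have ((n-k-j)(n-k-(k-j)))/((n-j)(n-(k-j))) ≤ ((n - 3k/2)/(n - k/2))^2. -/
theorem stmt_3 (n k j : ℕ) (hj1 : 1 ≤ j) (hj2 : j ≤ k - 1) (hn : 2 * k < n) :
    (((n : ℝ) - k - j) * ((n : ℝ) - k - (k - j : ℕ)))
        / (((n : ℝ) - j) * ((n : ℝ) - (k - j : ℕ)))
      ≤ (((n : ℝ) - 3 * k / 2) / ((n : ℝ) - k / 2)) ^ 2 := by
  have hjk : j < k := by omega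
  have hkn : 2 * k < n := hn
  have hcast : ((k - j : ℕ) : ℝ) = (k : ℝ) - j := by
    push_cast [Nat.cast_sub hjk.le]; ring
  rw [hcast]
  have hjr : (1 : ℝ) ≤ j := by exact_mod_cast hj1
  have hjkr : (j : ℝ) + 1 ≤ k := by exact_mod_cast hjk
  have hnr : 2 * (k : ℝ) < n := by exact_mod_cast hkn
  have hd1 : (0 : ℝ) < ((n : ℝ) - j) * ((n : ℝ) - ((k : ℝ) - j)) := by
    apply mul_pos <;> nlinarith
  have hd2 : (0 : ℝ) < ((n : ℝ) - k / 2) ^ 2 := by nlinarith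
  rw [div_pow, div_le_div_iff₀ hd1 hd2]
  nlinarith [sq_nonneg ((k : ℝ) / 2 - j), sq_nonneg ((k : ℝ) - 2 * j),
    mul_nonneg (mul_nonneg (sq_nonneg ((k : ℝ) - 2 * j)) (by linarith : (0:ℝ) ≤ (k:ℝ))) (by linarith : (0:ℝ) ≤ 2 * (n:ℝ) - 2 * k)]
end

section
/- Let n > 2k ≥ 4 and fix F₀, G₀ ∈ [2,n]^(k) (k-subsets of {2,...,n}) with F₀ ∩ G₀ ≠ ∅. Define F = {F₀} ∪ {F ∈ [n]^(k) : 1 ∈ F, F ∩ G₀ ≠ ∅} and G = {G₀} ∪ {G ∈ [n]^(k) : 1 ∈ G, G ∩ F₀ ≠ ∅}. Then F and G are cross-intersecting, both non-trivial, and |F| = |G| = C(n-1,k-1) - C(n-k-1,k-1) + 1. -/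
open Finset

lemma aux_card (s : Finset ℕ) (a : ℕ) (ha : a ∉ s) (m : ℕ) :
    (((insert a s).powersetCard (m+1)).filter (fun A => a ∈ A)).card = s.card.choose m := by
  rw [show m + 1 = Nat.succ m from rfl, Finset.powersetCard_succ_insert ha, filter_union]
  have h1 : (s.powersetCard (m+1)).filter (fun A => a ∈ A) = ∅ := by
    rw [filter_eq_empty_iff]
    intro A hA haA
    exact ha ((mem_powersetCard.1 hA).1 haA)
  have h2 : ((s.powersetCard m).image (insert a)).filter (fun A => a ∈ A)
      = (s.powersetCard m).image (insert a) := by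
    apply filter_true_of_mem
    intro A hA
    obtain ⟨B, _, rfl⟩ := mem_image.1 hA
    exact mem_insert_self _ _
  rw [h1, h2, empty_union, card_image_of_injOn, card_powersetCard]
  intro A hA B hB h
  have hAa : a ∉ A := fun h' => ha ((mem_powersetCard.1 hA).1 h')
  have hBa : a ∉ B := fun h' => ha ((mem_powersetCard.1 hB).1 h')
  rw [← erase_insert hAa, ← erase_insert hBa, h]

lemma icc_insert (n : ℕ) (hn : 1 ≤ n) : Finset.Icc 1 n = insert 1 (Finset.Icc 2 n) := by
  ext x; simp only [mem_Icc, mem_insert]; omega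

lemma count_aux (n k : ℕ) (hk : 2 ≤ k) (hn : 2 * k < n) (G₀ : Finset ℕ)
    (hGs : G₀ ⊆ Finset.Icc 2 n) (hGc : G₀.card = k) :
    (((Finset.Icc 1 n).powersetCard k).filter (fun A => 1 ∈ A ∧ (A ∩ G₀).Nonempty)).card
      = (n-1).choose (k-1) - (n-k-1).choose (k-1) := by
  obtain ⟨m, rfl⟩ : ∃ m, k = m + 1 := ⟨k - 1, by omega⟩
  have h1G : (1 : ℕ) ∉ G₀ := fun h => by simpa using (mem_Icc.1 (hGs h)).1
  set T := ((Finset.Icc 1 n).powersetCard (m+1)).filter (fun A => 1 ∈ A) with hT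
  have hTcard : T.card = (n-1).choose m := by
    rw [hT, icc_insert n (by omega), aux_card _ _ (by simp), Nat.card_Icc]
    congr 1
  set S := ((Finset.Icc 1 n).powersetCard (m+1)).filter
      (fun A => 1 ∈ A ∧ (A ∩ G₀).Nonempty) with hS
  set D := ((Finset.Icc 1 n).powersetCard (m+1)).filter
      (fun A => 1 ∈ A ∧ A ∩ G₀ = ∅) with hD
  have hSD : S.card + D.card = T.card := by
    have e1 : S = T.filter (fun A => (A ∩ G₀).Nonempty) := by
      rw [hS, hT, filter_filter]
    have e2 : D = T.filter (fun A => ¬ (A ∩ G₀).Nonempty) := by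
      rw [hD, hT, filter_filter]
      apply filter_congr
      intro A _
      simp [not_nonempty_iff_eq_empty, and_comm]
    rw [e1, e2]
    exact card_filter_add_card_filter_not _
  have hDeq : D = ((Finset.Icc 1 n \ G₀).powersetCard (m+1)).filter (fun A => 1 ∈ A) := by
    ext A
    simp only [hD, mem_filter, mem_powersetCard, subset_sdiff]
    constructor
    · rintro ⟨⟨h1, h2⟩, h3, h4⟩
      exact ⟨⟨⟨h1, disjoint_iff_inter_eq_empty.2 h4⟩, h2⟩, h3⟩
    · rintro ⟨⟨⟨h1, h4⟩, h2⟩, h3⟩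
      exact ⟨⟨h1, h2⟩, h3, disjoint_iff_inter_eq_empty.1 h4⟩
  have hsplit : Finset.Icc 1 n \ G₀ = insert 1 (Finset.Icc 2 n \ G₀) := by
    rw [icc_insert n (by omega), insert_sdiff_of_notMem _ h1G]
  have hDcard : D.card = (n-1-(m+1)).choose m := by
    rw [hDeq, hsplit, aux_card _ _ (by simp [h1G]), card_sdiff_of_subset hGs, Nat.card_Icc, hGc]
    congr 1
  have : S.card = T.card - D.card := by omega
  rw [this, hTcard, hDcard]
  have e : n - 1 - (m+1) = n - (m+1) - 1 := by omega
  rw [e, Nat.add_sub_cancel]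

theorem stmt_7 (n k : ℕ) (hk : 2 ≤ k) (hn : 2 * k < n)
    (F₀ G₀ : Finset ℕ)
    (hF₀ : F₀ ∈ (Finset.Icc 2 n).powersetCard k)
    (hG₀ : G₀ ∈ (Finset.Icc 2 n).powersetCard k)
    (hFG₀ : (F₀ ∩ G₀).Nonempty)
    (F G : Finset (Finset ℕ))
    (hF : F = insert F₀ (((Finset.Icc 1 n).powersetCard k).filter
        (fun A => 1 ∈ A ∧ (A ∩ G₀).Nonempty)))
    (hG : G = insert G₀ (((Finset.Icc 1 n).powersetCard k).filter
        (fun B => 1 ∈ B ∧ (B ∩ F₀).Nonempty))) :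
    (∀ A ∈ F, ∀ B ∈ G, (A ∩ B).Nonempty) ∧
    (∀ i : ℕ, ∃ A ∈ F, i ∉ A) ∧ (∀ i : ℕ, ∃ B ∈ G, i ∉ B) ∧
    F.card = (n - 1).choose (k - 1) - (n - k - 1).choose (k - 1) + 1 ∧
    G.card = (n - 1).choose (k - 1) - (n - k - 1).choose (k - 1) + 1 := by
  obtain ⟨hF₀s, hF₀c⟩ := mem_powersetCard.1 hF₀
  obtain ⟨hG₀s, hG₀c⟩ := mem_powersetCard.1 hG₀
  have h1F : (1 : ℕ) ∉ F₀ := fun h => by simpa using (mem_Icc.1 (hF₀s h)).1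
  have h1G : (1 : ℕ) ∉ G₀ := fun h => by simpa using (mem_Icc.1 (hG₀s h)).1
  -- key non-triviality construction
  have key : ∀ (X₀ Y₀ : Finset ℕ), X₀ ⊆ Finset.Icc 2 n → X₀.card = k →
      Y₀ ⊆ Finset.Icc 2 n → Y₀.card = k →
      ∀ i : ℕ, ∃ A ∈ insert X₀ (((Finset.Icc 1 n).powersetCard k).filter
        (fun A => 1 ∈ A ∧ (A ∩ Y₀).Nonempty)), i ∉ A := by
    intro X₀ Y₀ hXs hXc hYs hYc i
    by_cases hi : i = 1
    · refine ⟨X₀, mem_insert_self _ _, fun h => ?_⟩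
      subst hi
      simpa using (mem_Icc.1 (hXs h)).1
    · -- pick g ∈ Y₀ with g ≠ i
      have herase : (Y₀.erase i).Nonempty := by
        rw [← card_pos]
        have := Finset.pred_card_le_card_erase (s := Y₀) (a := i)
        omega
      obtain ⟨g, hg⟩ := herase
      have hgY : g ∈ Y₀ := mem_of_mem_erase hg
      have hgi : g ≠ i := ne_of_mem_erase hg
      have hg2 : 2 ≤ g ∧ g ≤ n := mem_Icc.1 (hYs hgY)
      have hsub : ({1, g} : Finset ℕ) ⊆ (Finset.Icc 1 n).erase i := by
        intro x hx
        simp only [mem_insert, mem_singleton] at hx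
        rw [mem_erase, mem_Icc]
        rcases hx with rfl | rfl
        · exact ⟨fun h => hi h.symm, by omega⟩
        · exact ⟨hgi, by omega⟩
      have hcard2 : ({1, g} : Finset ℕ).card = 2 := by
        rw [card_insert_of_notMem (by simp; omega), card_singleton]
      have hbig : k ≤ ((Finset.Icc 1 n).erase i).card := by
        have := Finset.pred_card_le_card_erase (s := Finset.Icc 1 n) (a := i)
        rw [Nat.card_Icc] at this
        omega
      obtain ⟨A, hA1, hA2, hA3⟩ := exists_subsuperset_card_eq hsub (by omega) hbig
      refine ⟨A, ?_, fun h => (mem_erase.1 (hA2 h)).1 rfl⟩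
      apply mem_insert_of_mem
      rw [mem_filter, mem_powersetCard]
      refine ⟨⟨hA2.trans (erase_subset _ _), hA3⟩, hA1 (by simp), ⟨g, ?_⟩⟩
      exact mem_inter.2 ⟨hA1 (by simp), hgY⟩
  refine ⟨?_, ?_, ?_, ?_, ?_⟩
  · intro A hA B hB
    rw [hF, mem_insert] at hA
    rw [hG, mem_insert] at hB
    rcases hA with rfl | hA <;> rcases hB with rfl | hB
    · exact hFG₀
    · obtain ⟨_, _, x, hx⟩ := mem_filter.1 hB
      exact ⟨x, by rw [inter_comm]; exact hx⟩
    · obtain ⟨_, _, hne⟩ := mem_filter.1 hA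
      exact hne
    · obtain ⟨_, h1A, _⟩ := mem_filter.1 hA
      obtain ⟨_, h1B, _⟩ := mem_filter.1 hB
      exact ⟨1, mem_inter.2 ⟨h1A, h1B⟩⟩
  · rw [hF]; exact key F₀ G₀ hF₀s hF₀c hG₀s hG₀c
  · rw [hG]; exact key G₀ F₀ hG₀s hG₀c hF₀s hF₀c
  · rw [hF, card_insert_of_notMem (fun h => h1F (mem_filter.1 h).2.1),
      count_aux n k hk hn G₀ hG₀s hG₀c]
  · rw [hG, card_insert_of_notMem (fun h => h1G (mem_filter.1 h).2.1),
      count_aux n k hk hn F₀ hF₀s hF₀c]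
end

section
/- For k ≥ 8 and 2k+1 ≤ n ≤ 3k, with h(n,k) = C(n-1,k-1) - C(n-k-1,k-1) + 1, the inequality C(n-2,k-2) + 2·C(n-3,k-2) + h(n,k)^2/(C(n-2,k-2) + 2·C(n-3,k-2)) > 2·C(n-1,k-1) holds. -/
set_option maxHeartbeats 1000000 in
lemma aux_choose_le_two_pow (m i : ℕ) : m.choose i ≤ 2 ^ m := by
  rcases le_or_gt i m with h | h
  · calc m.choose i ≤ ∑ j ∈ Finset.range (m+1), m.choose j :=
        Finset.single_le_sum (fun j _ => Nat.zero_le _) (Finset.mem_range.mpr (by omega))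
    _ = 2 ^ m := Nat.sum_range_choose m
  · simp [Nat.choose_eq_zero_of_lt h]

lemma aux_step32 (N r : ℕ) (h1 : r ≤ N) (h2 : N + 1 ≤ 3 * r) :
    3 * N.choose r ≤ 2 * (N+1).choose r := by
  have id := Nat.choose_mul_succ_eq N r
  have hpos : 0 < N + 1 := Nat.succ_pos N
  apply Nat.le_of_mul_le_mul_right _ hpos
  calc 3 * N.choose r * (N+1) = 3 * (N.choose r * (N+1)) := by ring
    _ = 3 * ((N+1).choose r * (N+1-r)) := by rw [id]
    _ = (N+1).choose r * (3 * (N+1-r)) := by ring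
    _ ≤ (N+1).choose r * (2 * (N+1)) := Nat.mul_le_mul_left _ (by omega)
    _ = 2 * (N+1).choose r * (N+1) := by ring

lemma aux_step12 (N r : ℕ) (h1 : 2 * r ≤ N + 1) :
    (N+1).choose r ≤ 2 * N.choose r := by
  have id := Nat.choose_mul_succ_eq N r
  have hpos : 0 < N + 1 - r := by omega
  apply Nat.le_of_mul_le_mul_right _ hpos
  calc (N+1).choose r * (N+1-r) = N.choose r * (N+1) := id.symm
    _ ≤ N.choose r * (2 * (N+1-r)) := Nat.mul_le_mul_left _ (by omega)
    _ = 2 * N.choose r * (N+1-r) := by ring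

lemma aux_grow (K T : ℕ) (h : T ≤ K + 21) :
    3 ^ T * (2*K+42).choose (K+21) ≤ 2 ^ T * (2*K+T+42).choose (K+21) := by
  induction T with
  | zero => simp
  | succ T ih =>
    have hT : T ≤ K + 21 := by omega
    have step : 3 * (2*K+T+42).choose (K+21) ≤ 2 * (2*K+T+43).choose (K+21) := by
      have := aux_step32 (2*K+T+42) (K+21) (by omega) (by omega)
      convert this using 3 <;> omega
    calc 3 ^ (T+1) * (2*K+42).choose (K+21) = 3 * (3 ^ T * (2*K+42).choose (K+21)) := by ring
      _ ≤ 3 * (2 ^ T * (2*K+T+42).choose (K+21)) := Nat.mul_le_mul_left _ (ih hT)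
      _ = 2 ^ T * (3 * (2*K+T+42).choose (K+21)) := by ring
      _ ≤ 2 ^ T * (2 * (2*K+T+43).choose (K+21)) := Nat.mul_le_mul_left _ step
      _ = 2 ^ (T+1) * (2*K+(T+1)+42).choose (K+21) := by ring_nf

lemma aux_cube (K : ℕ) : (K+22)^3 ≤ 2^(K+14) := by
  induction K with
  | zero => norm_num
  | succ K ih =>
    have h : (K+23)^3 ≤ 2*(K+22)^3 := by
      have e1 : (K+23)^3 = K^3+69*K^2+1587*K+12167 := by ring
      have e2 : 2*(K+22)^3 = 2*K^3+132*K^2+2904*K+21296 := by ring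
      linarith [Nat.zero_le (K^3), Nat.zero_le (K^2), Nat.zero_le K]
    calc (K+1+22)^3 = (K+23)^3 := by ring_nf
      _ ≤ 2*(K+22)^3 := h
      _ ≤ 2*2^(K+14) := Nat.mul_le_mul_left _ ih
      _ = 2^(K+1+14) := by ring

lemma aux_smallT (T : ℕ) (h : T ≤ 21) : 4^T ≤ 3^T*(T+1)^2 := by
  interval_cases T <;> norm_num

lemma aux_L3 (K : ℕ) : 2^(K+28)*(K+22) ≤ 3^(K+21) := by
  induction K with
  | zero => norm_num
  | succ K ih =>
    calc 2^(K+1+28)*(K+1+22) = 2^(K+28)*(2*(K+23)) := by ring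
      _ ≤ 2^(K+28)*(3*(K+22)) := Nat.mul_le_mul_left _ (by omega)
      _ = 3*(2^(K+28)*(K+22)) := by ring
      _ ≤ 3*3^(K+21) := Nat.mul_le_mul_left _ ih
      _ = 3^(K+1+21) := by ring

lemma aux_L2 (s d : ℕ) :
    3^(s+d+6)*(s+d+7)^2*4^(s+6) ≤ 3^(s+6)*(s+7)^2*4^(s+d+6) := by
  induction d with
  | zero => simp
  | succ d ih =>
    have h : 3*(s+d+8)^2 ≤ 4*(s+d+7)^2 := by
      have e1 : 3*(s+d+8)^2 = 3*(s+d)^2+48*(s+d)+192 := by ring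
      have e2 : 4*(s+d+7)^2 = 4*(s+d)^2+56*(s+d)+196 := by ring
      linarith [Nat.zero_le ((s+d)^2), Nat.zero_le (s+d)]
    calc 3^(s+(d+1)+6)*(s+(d+1)+7)^2*4^(s+6)
        = (3*(s+d+8)^2)*(3^(s+d+6)*4^(s+6)) := by ring
      _ ≤ (4*(s+d+7)^2)*(3^(s+d+6)*4^(s+6)) := Nat.mul_le_mul_right _ h
      _ = 4*(3^(s+d+6)*(s+d+7)^2*4^(s+6)) := by ring
      _ ≤ 4*(3^(s+6)*(s+7)^2*4^(s+d+6)) := Nat.mul_le_mul_left _ ih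
      _ = 3^(s+6)*(s+7)^2*4^(s+(d+1)+6) := by ring

lemma aux_num (K T : ℕ) (h : T ≤ K + 21) :
    2^(K+2*T+28)*(K+22)^3 ≤ 3^T*(T+1)^2*2^(2*K+42) := by
  rcases le_or_gt T 21 with hT | hT
  · have e : 2^(K+2*T+28)*2^(K+14) = 4^T*2^(2*K+42) := by
      rw [← pow_add, show (K+2*T+28)+(K+14) = 2*T+(2*K+42) by omega, pow_add, pow_mul]
      norm_num
    calc 2^(K+2*T+28)*(K+22)^3 ≤ 2^(K+2*T+28)*2^(K+14) :=
        Nat.mul_le_mul_left _ (aux_cube K)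
      _ = 4^T*2^(2*K+42) := e
      _ ≤ (3^T*(T+1)^2)*2^(2*K+42) := Nat.mul_le_mul_right _ (aux_smallT T hT)
      _ = 3^T*(T+1)^2*2^(2*K+42) := by ring
  · obtain ⟨s, rfl⟩ : ∃ s, T = s + 6 := ⟨T - 6, by omega⟩
    obtain ⟨d, hd⟩ : ∃ d, K + 22 = (s+6)+1 + d := ⟨K + 22 - (s + 7), by omega⟩
    have l2 := aux_L2 s d
    have e1 : K + 21 = s + d + 6 := by omega
    have e2 : K + 22 = s + d + 7 := by omega
    have l3 := aux_L3 K
    have eA : (2:ℕ)^(K+2*(s+6)+28) = 2^(K+28)*4^(s+6) := by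
      rw [show K+2*(s+6)+28 = (K+28)+2*(s+6) by omega, pow_add, pow_mul]; norm_num
    have eB : (4:ℕ)^(s+d+6) = 2^(2*K+42) := by
      rw [show 2*K+42 = 2*(s+d+6) by omega, pow_mul]; norm_num
    calc 2^(K+2*(s+6)+28)*(K+22)^3
        = (2^(K+28)*(K+22))*((K+22)^2*4^(s+6)) := by rw [eA]; ring
      _ ≤ 3^(K+21)*((K+22)^2*4^(s+6)) := Nat.mul_le_mul_right _ l3
      _ = 3^(s+d+6)*(s+d+7)^2*4^(s+6) := by rw [e1, e2]; ring
      _ ≤ 3^(s+6)*(s+7)^2*4^(s+d+6) := l2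
      _ = 3^(s+6)*(s+6+1)^2*2^(2*K+42) := by rw [eB]

lemma aux_abstract (K T c b C D cb : ℕ) (hT : T ≤ K + 21)
    (s1 : c * (K+21) = b * (K+T+22)) (hbc : b ≤ c)
    (hC4 : C ≤ 4*c) (hDpow : D ≤ 2^(K+T+22))
    (hgrow : 3^T * cb ≤ 2^T * c) (hcb4 : 4^(K+21) ≤ 2*(K+21)*cb) :
    2 * C * D ≤ (c - b)^2 := by
  have s2 : (K+T+22)*(c-b) = (T+1)*c := by
    have h1 : (K+T+22)*b = (K+21)*c := by linarith [s1]
    rw [Nat.mul_sub, h1, ← Nat.sub_mul, show K+T+22-(K+21) = T+1 by omega]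
  have S' : 8*(K+T+22)^2*2^(K+T+22) ≤ (T+1)^2*c := by
    have hMpos : 0 < 2^T*(2*(K+21)) := Nat.mul_pos (pow_pos (by omega) T) (by omega)
    apply Nat.le_of_mul_le_mul_left _ hMpos
    have step1 : 2^T*(2*(K+21))*(8*(K+T+22)^2*2^(K+T+22)) ≤ 2^(K+2*T+28)*(K+22)^3 := by
      have e : (2:ℕ)^T*2^(K+T+22) = 2^(K+2*T+22) := by
        rw [← pow_add]; congr 1; omega
      have hq : 16*((K+21)*(K+T+22)^2) ≤ 64*(K+22)^3 := by
        have h2 : (K+T+22)^2 ≤ (2*(K+22))^2 := Nat.pow_le_pow_left (by omega) 2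
        calc 16*((K+21)*(K+T+22)^2) ≤ 16*((K+22)*(2*(K+22))^2) :=
            Nat.mul_le_mul_left _ (Nat.mul_le_mul (by omega) h2)
          _ = 64*(K+22)^3 := by ring
      calc 2^T*(2*(K+21))*(8*(K+T+22)^2*2^(K+T+22))
          = (2^T*2^(K+T+22))*(16*((K+21)*(K+T+22)^2)) := by ring
        _ = 2^(K+2*T+22)*(16*((K+21)*(K+T+22)^2)) := by rw [e]
        _ ≤ 2^(K+2*T+22)*(64*(K+22)^3) := Nat.mul_le_mul_left _ hq
        _ = 2^(K+2*T+28)*(K+22)^3 := by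
            rw [show K+2*T+28 = K+2*T+22+6 by omega, pow_add]; ring
    have step2 : (3:ℕ)^T*(T+1)^2*2^(2*K+42) ≤ 2^T*(2*(K+21))*((T+1)^2*c) := by
      have e42 : (4:ℕ)^(K+21) = 2^(2*K+42) := by
        rw [show 2*K+42 = 2*(K+21) by omega, pow_mul]; norm_num
      calc 3^T*(T+1)^2*2^(2*K+42) = (T+1)^2*(3^T*4^(K+21)) := by rw [e42]; ring
        _ ≤ (T+1)^2*(3^T*(2*(K+21)*cb)) :=
            Nat.mul_le_mul_left _ (Nat.mul_le_mul_left _ hcb4)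
        _ = (2*(K+21))*((T+1)^2*(3^T*cb)) := by ring
        _ ≤ (2*(K+21))*((T+1)^2*(2^T*c)) :=
            Nat.mul_le_mul_left _ (Nat.mul_le_mul_left _ hgrow)
        _ = 2^T*(2*(K+21))*((T+1)^2*c) := by ring
    calc 2^T*(2*(K+21))*(8*(K+T+22)^2*2^(K+T+22))
        ≤ 2^(K+2*T+28)*(K+22)^3 := step1
      _ ≤ 3^T*(T+1)^2*2^(2*K+42) := aux_num K T hT
      _ ≤ 2^T*(2*(K+21))*((T+1)^2*c) := step2
  have hsq : 0 < (K+T+22)^2 := pow_pos (by omega) 2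
  apply Nat.le_of_mul_le_mul_left _ hsq
  calc (K+T+22)^2*(2*C*D) ≤ (K+T+22)^2*(2*(4*c)*2^(K+T+22)) :=
        Nat.mul_le_mul_left _ (Nat.mul_le_mul (Nat.mul_le_mul_left _ hC4) hDpow)
    _ = (8*(K+T+22)^2*2^(K+T+22))*c := by ring
    _ ≤ ((T+1)^2*c)*c := Nat.mul_le_mul_right _ S'
    _ = ((T+1)*c)^2 := by ring
    _ = ((K+T+22)*(c-b))^2 := by rw [s2]
    _ = (K+T+22)^2*(c-b)^2 := by ring

lemma aux_key (K T : ℕ) (hT : T ≤ K + 21) :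
    2 * ((2*K+T+44).choose (K+21)) * ((K+T+22).choose (K+21))
      ≤ ((2*K+T+42).choose (K+21) - (2*K+T+42).choose (K+20))^2 := by
  apply aux_abstract K T _ _ _ _ ((2*K+42).choose (K+21)) hT
  · have := Nat.choose_succ_right_eq (2*K+T+42) (K+20)
    rw [show K+20+1 = K+21 by omega, show 2*K+T+42-(K+20) = K+T+22 by omega] at this
    exact this
  · have := Nat.choose_le_succ_of_lt_half_left (r := K+20) (n := 2*K+T+42) (by omega)
    rwa [show K+20+1 = K+21 by omega] at this
  · have h1 : (2*K+T+44).choose (K+21) ≤ 2*(2*K+T+43).choose (K+21) := by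
      have := aux_step12 (2*K+T+43) (K+21) (by omega)
      rwa [show 2*K+T+43+1 = 2*K+T+44 by omega] at this
    have h2 : (2*K+T+43).choose (K+21) ≤ 2*(2*K+T+42).choose (K+21) := by
      have := aux_step12 (2*K+T+42) (K+21) (by omega)
      rwa [show 2*K+T+42+1 = 2*K+T+43 by omega] at this
    calc (2*K+T+44).choose (K+21) ≤ 2*(2*K+T+43).choose (K+21) := h1
      _ ≤ 2*(2*(2*K+T+42).choose (K+21)) := Nat.mul_le_mul_left _ h2
      _ = 4*(2*K+T+42).choose (K+21) := by ring
  · exact aux_choose_le_two_pow _ _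
  · exact aux_grow K T hT
  · have := Nat.four_pow_le_two_mul_self_mul_centralBinom (K+21) (by omega)
    rwa [Nat.centralBinom, show 2*(K+21) = 2*K+42 by omega] at this

set_option maxHeartbeats 4000000 in
lemma aux_core (n k : ℕ) (hk : 8 ≤ k) (hn1 : 2*k+1 ≤ n) (hn2 : n ≤ 3*k) :
    2 * ((n-1).choose (k-1)) * ((n-2).choose (k-2) + 2*((n-3).choose (k-2)))
      < ((n-2).choose (k-2) + 2*((n-3).choose (k-2)))^2
        + ((n-1).choose (k-1) - (n-k-1).choose (k-1) + 1)^2 := by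
  rcases le_or_gt k 21 with hsmall | hbig
  · interval_cases k <;> interval_cases n <;>
      (simp only [Nat.choose_eq_descFactorial_div_factorial]; decide)
  · obtain ⟨K, rfl⟩ : ∃ K, k = K + 22 := ⟨k - 22, by omega⟩
    obtain ⟨T, rfl⟩ : ∃ T, n = 2*K+T+45 := ⟨n - (2*K+45), by omega⟩
    have hT : T ≤ K + 21 := by omega
    rw [show 2*K+T+45-1 = 2*K+T+44 by omega, show K+22-1 = K+21 by omega,
        show 2*K+T+45-2 = 2*K+T+43 by omega, show K+22-2 = K+20 by omega,
        show 2*K+T+45-3 = 2*K+T+42 by omega,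
        show 2*K+T+45-(K+22)-1 = K+T+22 by omega]
    have key := aux_key K T hT
    have hbc : (2*K+T+42).choose (K+20) ≤ (2*K+T+42).choose (K+21) := by
      have := Nat.choose_le_succ_of_lt_half_left (r := K+20) (n := 2*K+T+42) (by omega)
      rwa [show K+20+1 = K+21 by omega] at this
    have hP1 : (2*K+T+44).choose (K+21)
        = (2*K+T+43).choose (K+20) + (2*K+T+43).choose (K+21) := by
      rw [show 2*K+T+44 = (2*K+T+43)+1 by omega, show K+21 = (K+20)+1 by omega]
      exact Nat.choose_succ_succ _ _
    have hP2 : (2*K+T+43).choose (K+21)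
        = (2*K+T+42).choose (K+20) + (2*K+T+42).choose (K+21) := by
      rw [show 2*K+T+43 = (2*K+T+42)+1 by omega, show K+21 = (K+20)+1 by omega]
      exact Nat.choose_succ_succ _ _
    have hD1 : 1 ≤ (K+T+22).choose (K+21) := Nat.choose_pos (by omega)
    have hDC : (K+T+22).choose (K+21) ≤ (2*K+T+44).choose (K+21) :=
      Nat.choose_le_choose _ (by omega)
    have hC1 : 1 ≤ (2*K+T+44).choose (K+21) := Nat.choose_pos (by omega)
    zify [hbc, hDC] at key hP1 hP2 hD1 hC1 ⊢
    nlinarith [key, hP1, hP2, hD1, hC1,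
      sq_nonneg (((K+T+22).choose (K+21) : ℤ) - 1)]

theorem stmt_10 (n k : ℕ) (hk : 8 ≤ k) (hn1 : 2 * k + 1 ≤ n) (hn2 : n ≤ 3 * k) :
    ((n - 2).choose (k - 2) : ℝ) + 2 * (n - 3).choose (k - 2)
        + (((n - 1).choose (k - 1) - (n - k - 1).choose (k - 1) + 1 : ℕ) : ℝ) ^ 2
          / (((n - 2).choose (k - 2) : ℝ) + 2 * (n - 3).choose (k - 2))
      > 2 * (n - 1).choose (k - 1) := by
  have hcore := aux_core n k hk (by omega) (by omega)
  have hb : 0 < (n-3).choose (k-2) := Nat.choose_pos (by omega)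
  set x : ℝ := ((n - 2).choose (k - 2) : ℝ) + 2 * (n - 3).choose (k - 2) with hxdef
  have hx : 0 < x := by
    have h1 : (0:ℝ) < ((n-3).choose (k-2) : ℝ) := by exact_mod_cast hb
    have h2 : (0:ℝ) ≤ ((n-2).choose (k-2) : ℝ) := Nat.cast_nonneg _
    rw [hxdef]; linarith
  have key : 2*((n-1).choose (k-1):ℝ)*x
      < x^2 + (((n-1).choose (k-1) - (n-k-1).choose (k-1) + 1 : ℕ):ℝ)^2 := by
    rw [hxdef]
    exact_mod_cast hcore
  rw [gt_iff_lt, ← sub_pos]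
  have e : x + (((n-1).choose (k-1) - (n-k-1).choose (k-1) + 1 : ℕ):ℝ)^2/x
      - 2*((n-1).choose (k-1):ℝ)
      = (x^2 + (((n-1).choose (k-1) - (n-k-1).choose (k-1) + 1 : ℕ):ℝ)^2
          - 2*((n-1).choose (k-1):ℝ)*x)/x := by
    field_simp
  rw [e]
  exact div_pos (by linarith) hx
end

section
/- For k ≥ 8 and 2k+1 ≤ n ≤ 4k, with h(n,k) = C(n-1,k-1) - C(n-k-1,k-1) + 1, the inequality C(n-2,k-2) + C(n-4,k-2) + h(n,k)^2/(C(n-2,k-2) + C(n-4,k-2)) > 2·C(n-1,k-1) holds. -/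
lemma estep8 (M j : ℕ) : ((M+2*j+8).choose (j+7) : ℝ) * (((M:ℝ)+2*j+9)) = ((M+2*j+9).choose (j+7) : ℝ) * (((M:ℝ)+j+2)) := by
  have h := Nat.choose_mul_succ_eq (M+2*j+8) (j+7)
  have h1 : M+2*j+8+1 = M+2*j+9 := by omega
  have h2 : M+2*j+9 - (j+7) = M+j+2 := by omega
  rw [h1, h2] at h
  exact_mod_cast h

lemma estep9 (M j : ℕ) : ((M+2*j+9).choose (j+7) : ℝ) * (((M:ℝ)+2*j+10)) = ((M+2*j+10).choose (j+7) : ℝ) * (((M:ℝ)+j+3)) := by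
  have h := Nat.choose_mul_succ_eq (M+2*j+9) (j+7)
  have h1 : M+2*j+9+1 = M+2*j+10 := by omega
  have h2 : M+2*j+10 - (j+7) = M+j+3 := by omega
  rw [h1, h2] at h
  exact_mod_cast h

lemma estep10 (M j : ℕ) : ((M+2*j+10).choose (j+7) : ℝ) * (((M:ℝ)+2*j+11)) = ((M+2*j+11).choose (j+7) : ℝ) * (((M:ℝ)+j+4)) := by
  have h := Nat.choose_mul_succ_eq (M+2*j+10) (j+7)
  have h1 : M+2*j+10+1 = M+2*j+11 := by omega
  have h2 : M+2*j+11 - (j+7) = M+j+4 := by omega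
  rw [h1, h2] at h
  exact_mod_cast h

lemma estep11 (M j : ℕ) : ((M+2*j+11).choose (j+7) : ℝ) * (((M:ℝ)+2*j+12)) = ((M+2*j+12).choose (j+7) : ℝ) * (((M:ℝ)+j+5)) := by
  have h := Nat.choose_mul_succ_eq (M+2*j+11) (j+7)
  have h1 : M+2*j+11+1 = M+2*j+12 := by omega
  have h2 : M+2*j+12 - (j+7) = M+j+5 := by omega
  rw [h1, h2] at h
  exact_mod_cast h

lemma estep12 (M j : ℕ) : ((M+2*j+12).choose (j+7) : ℝ) * (((M:ℝ)+2*j+13)) = ((M+2*j+13).choose (j+7) : ℝ) * (((M:ℝ)+j+6)) := by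
  have h := Nat.choose_mul_succ_eq (M+2*j+12) (j+7)
  have h1 : M+2*j+12+1 = M+2*j+13 := by omega
  have h2 : M+2*j+13 - (j+7) = M+j+6 := by omega
  rw [h1, h2] at h
  exact_mod_cast h

lemma estep13 (M j : ℕ) : ((M+2*j+13).choose (j+7) : ℝ) * (((M:ℝ)+2*j+14)) = ((M+2*j+14).choose (j+7) : ℝ) * (((M:ℝ)+j+7)) := by
  have h := Nat.choose_mul_succ_eq (M+2*j+13) (j+7)
  have h1 : M+2*j+13+1 = M+2*j+14 := by omega
  have h2 : M+2*j+14 - (j+7) = M+j+7 := by omega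
  rw [h1, h2] at h
  exact_mod_cast h

lemma estep14 (M j : ℕ) : ((M+2*j+14).choose (j+7) : ℝ) * (((M:ℝ)+2*j+15)) = ((M+2*j+15).choose (j+7) : ℝ) * (((M:ℝ)+j+8)) := by
  have h := Nat.choose_mul_succ_eq (M+2*j+14) (j+7)
  have h1 : M+2*j+14+1 = M+2*j+15 := by omega
  have h2 : M+2*j+15 - (j+7) = M+j+8 := by omega
  rw [h1, h2] at h
  exact_mod_cast h

lemma estep15 (M j : ℕ) : ((M+2*j+15).choose (j+7) : ℝ) * (((M:ℝ)+2*j+16)) = ((M+2*j+16).choose (j+7) : ℝ) * (((M:ℝ)+j+9)) := by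
  have h := Nat.choose_mul_succ_eq (M+2*j+15) (j+7)
  have h1 : M+2*j+15+1 = M+2*j+16 := by omega
  have h2 : M+2*j+16 - (j+7) = M+j+9 := by omega
  rw [h1, h2] at h
  exact_mod_cast h

set_option maxHeartbeats 2000000 in
lemma lemT1 (M j : ℕ) : ((M+2*j+8).choose (j+7) : ℝ) * (((M:ℝ)+2*j+9)*((M:ℝ)+2*j+10)*((M:ℝ)+2*j+11)*((M:ℝ)+2*j+12)*((M:ℝ)+2*j+13)*((M:ℝ)+2*j+14)) = ((M+2*j+14).choose (j+7) : ℝ) * (((M:ℝ)+j+2)*((M:ℝ)+j+3)*((M:ℝ)+j+4)*((M:ℝ)+j+5)*((M:ℝ)+j+6)*((M:ℝ)+j+7)) := by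
  linear_combination (((M:ℝ)+2*j+10)*((M:ℝ)+2*j+11)*((M:ℝ)+2*j+12)*((M:ℝ)+2*j+13)*((M:ℝ)+2*j+14))*(estep8 M j) + (((M:ℝ)+j+2)*((M:ℝ)+2*j+11)*((M:ℝ)+2*j+12)*((M:ℝ)+2*j+13)*((M:ℝ)+2*j+14))*(estep9 M j) + (((M:ℝ)+j+2)*((M:ℝ)+j+3)*((M:ℝ)+2*j+12)*((M:ℝ)+2*j+13)*((M:ℝ)+2*j+14))*(estep10 M j) + (((M:ℝ)+j+2)*((M:ℝ)+j+3)*((M:ℝ)+j+4)*((M:ℝ)+2*j+13)*((M:ℝ)+2*j+14))*(estep11 M j) + (((M:ℝ)+j+2)*((M:ℝ)+j+3)*((M:ℝ)+j+4)*((M:ℝ)+j+5)*((M:ℝ)+2*j+14))*(estep12 M j) + (((M:ℝ)+j+2)*((M:ℝ)+j+3)*((M:ℝ)+j+4)*((M:ℝ)+j+5)*((M:ℝ)+j+6))*(estep13 M j)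

lemma lemT2 (M j : ℕ) : ((M+2*j+14).choose (j+7) : ℝ) * (((M:ℝ)+2*j+15)*((M:ℝ)+2*j+16)) = ((M+2*j+16).choose (j+7) : ℝ) * (((M:ℝ)+j+8)*((M:ℝ)+j+9)) := by
  linear_combination (((M:ℝ)+2*j+16))*(estep14 M j) + (((M:ℝ)+j+8))*(estep15 M j)

set_option maxHeartbeats 2000000 in
lemma lemK (M j : ℕ) (hM : M ≤ 2*j+15) :
    2*(((M:ℝ)+j+2)*((M:ℝ)+j+3)*((M:ℝ)+j+4)*((M:ℝ)+j+5)*((M:ℝ)+j+6)*((M:ℝ)+j+7))*(((M:ℝ)+2*j+15)*((M:ℝ)+2*j+16)) ≤ (((M:ℝ)+2*j+9)*((M:ℝ)+2*j+10)*((M:ℝ)+2*j+11)*((M:ℝ)+2*j+12)*((M:ℝ)+2*j+13)*((M:ℝ)+2*j+14))*(((M:ℝ)+j+8)*((M:ℝ)+j+9)) := by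
  have hMr : (M:ℝ) ≤ 2*(j:ℝ)+15 := by exact_mod_cast hM
  have hj : (0:ℝ) ≤ (j:ℝ) := Nat.cast_nonneg j
  have hm : (0:ℝ) ≤ (M:ℝ) := Nat.cast_nonneg M
  have s1 : ((M:ℝ)+2*j+16)*((M:ℝ)+j+6) ≤ ((M:ℝ)+2*j+14)*((M:ℝ)+j+8) := by nlinarith
  have s2 : ((M:ℝ)+2*j+15)*((M:ℝ)+j+7) ≤ ((M:ℝ)+2*j+13)*((M:ℝ)+j+9) := by nlinarith
  have l2 : 4*((M:ℝ)+j+2) ≤ 3*((M:ℝ)+2*j+9) := by linarith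
  have l3 : 4*((M:ℝ)+j+3) ≤ 3*((M:ℝ)+2*j+10) := by linarith
  have l4 : 4*((M:ℝ)+j+4) ≤ 3*((M:ℝ)+2*j+11) := by linarith
  have l5 : 4*((M:ℝ)+j+5) ≤ 3*((M:ℝ)+2*j+12) := by linarith
  have m1 : (4*((M:ℝ)+j+2))*(4*((M:ℝ)+j+3)) ≤ (3*((M:ℝ)+2*j+9))*(3*((M:ℝ)+2*j+10)) :=
    mul_le_mul l2 l3 (by positivity) (by positivity)
  have m2 : (4*((M:ℝ)+j+4))*(4*((M:ℝ)+j+5)) ≤ (3*((M:ℝ)+2*j+11))*(3*((M:ℝ)+2*j+12)) :=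
    mul_le_mul l4 l5 (by positivity) (by positivity)
  have s4' : ((4*((M:ℝ)+j+2))*(4*((M:ℝ)+j+3)))*((4*((M:ℝ)+j+4))*(4*((M:ℝ)+j+5))) ≤ ((3*((M:ℝ)+2*j+9))*(3*((M:ℝ)+2*j+10)))*((3*((M:ℝ)+2*j+11))*(3*((M:ℝ)+2*j+12))) :=
    mul_le_mul m1 m2 (by positivity) (by positivity)
  have hbprod : (0:ℝ) ≤ ((M:ℝ)+j+2)*((M:ℝ)+j+3)*((M:ℝ)+j+4)*((M:ℝ)+j+5) := by positivity
  have e1 : ((4*((M:ℝ)+j+2))*(4*((M:ℝ)+j+3)))*((4*((M:ℝ)+j+4))*(4*((M:ℝ)+j+5))) = 256*(((M:ℝ)+j+2)*((M:ℝ)+j+3)*((M:ℝ)+j+4)*((M:ℝ)+j+5)) := by ring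
  have e2 : ((3*((M:ℝ)+2*j+9))*(3*((M:ℝ)+2*j+10)))*((3*((M:ℝ)+2*j+11))*(3*((M:ℝ)+2*j+12))) = 81*(((M:ℝ)+2*j+9)*((M:ℝ)+2*j+10)*((M:ℝ)+2*j+11)*((M:ℝ)+2*j+12)) := by ring
  rw [e1, e2] at s4'
  have s4 : 2*(((M:ℝ)+j+2)*((M:ℝ)+j+3)*((M:ℝ)+j+4)*((M:ℝ)+j+5)) ≤ ((M:ℝ)+2*j+9)*((M:ℝ)+2*j+10)*((M:ℝ)+2*j+11)*((M:ℝ)+2*j+12) := by linarith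
  have K1 : (2*(((M:ℝ)+j+2)*((M:ℝ)+j+3)*((M:ℝ)+j+4)*((M:ℝ)+j+5)))*(((M:ℝ)+2*j+15)*((M:ℝ)+j+7)) ≤ (((M:ℝ)+2*j+9)*((M:ℝ)+2*j+10)*((M:ℝ)+2*j+11)*((M:ℝ)+2*j+12))*(((M:ℝ)+2*j+13)*((M:ℝ)+j+9)) :=
    mul_le_mul s4 s2 (by positivity) (by positivity)
  have K' : ((2*(((M:ℝ)+j+2)*((M:ℝ)+j+3)*((M:ℝ)+j+4)*((M:ℝ)+j+5)))*(((M:ℝ)+2*j+15)*((M:ℝ)+j+7))) * (((M:ℝ)+2*j+16)*((M:ℝ)+j+6)) ≤ ((((M:ℝ)+2*j+9)*((M:ℝ)+2*j+10)*((M:ℝ)+2*j+11)*((M:ℝ)+2*j+12))*(((M:ℝ)+2*j+13)*((M:ℝ)+j+9))) * (((M:ℝ)+2*j+14)*((M:ℝ)+j+8)) :=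
    mul_le_mul K1 s1 (by positivity) (by positivity)
  calc 2*(((M:ℝ)+j+2)*((M:ℝ)+j+3)*((M:ℝ)+j+4)*((M:ℝ)+j+5)*((M:ℝ)+j+6)*((M:ℝ)+j+7))*(((M:ℝ)+2*j+15)*((M:ℝ)+2*j+16))
      = ((2*(((M:ℝ)+j+2)*((M:ℝ)+j+3)*((M:ℝ)+j+4)*((M:ℝ)+j+5)))*(((M:ℝ)+2*j+15)*((M:ℝ)+j+7))) * (((M:ℝ)+2*j+16)*((M:ℝ)+j+6)) := by ring
    _ ≤ ((((M:ℝ)+2*j+9)*((M:ℝ)+2*j+10)*((M:ℝ)+2*j+11)*((M:ℝ)+2*j+12))*(((M:ℝ)+2*j+13)*((M:ℝ)+j+9))) * (((M:ℝ)+2*j+14)*((M:ℝ)+j+8)) := K'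
    _ = (((M:ℝ)+2*j+9)*((M:ℝ)+2*j+10)*((M:ℝ)+2*j+11)*((M:ℝ)+2*j+12)*((M:ℝ)+2*j+13)*((M:ℝ)+2*j+14))*(((M:ℝ)+j+8)*((M:ℝ)+j+9)) := by ring

lemma algk (x8 x14 x16 Pa Pb Q S : ℝ) (hPa : 0 < Pa) (hQ : 0 < Q)
    (T1 : x8 * Pa = x14 * Pb) (T2 : x14 * S = x16 * Q)
    (K : 2*Pb*S ≤ Pa*Q) : 2 * x8 * x16 ≤ x14^2 := by
  have hPQ : 0 < Pa * Q := mul_pos hPa hQ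
  have big : (2 * x8 * x16) * (Pa * Q) ≤ x14^2 * (Pa * Q) := by
    calc (2 * x8 * x16) * (Pa * Q) = x14^2 * (2*Pb*S) := by
          linear_combination (2*x16*Q)*T1 - (2*x14*Pb)*T2
      _ ≤ x14^2 * (Pa * Q) := by nlinarith [sq_nonneg x14]
  exact le_of_mul_le_mul_right big hPQ

set_option maxHeartbeats 1000000 in
theorem kreal (M j : ℕ) (hM : M ≤ 2*j+15) :
    2 * ((M+2*j+8).choose (j+7) : ℝ) * ((M+2*j+16).choose (j+7):ℝ)
      ≤ ((M+2*j+14).choose (j+7) : ℝ)^2 := by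
  exact algk _ _ _ _ _ _ _ (by positivity) (by positivity)
    (lemT1 M j) (lemT2 M j) (lemK M j hM)

lemma hkey_abs (d x8 x14 c b : ℝ) (h1 : d ≤ x8) (h2 : x14 ≤ c) (h3 : 0 ≤ x14)
    (h4 : 0 ≤ b) (h5 : 0 ≤ d) (kk : 2*x8*b ≤ x14^2) : 2*d*b ≤ c^2 := by nlinarith

lemma final_abs (a1 a2 b c d : ℝ) (hApos : 0 < a1 + a2)
    (hkey : 2*d*b ≤ c^2) (hBr : b = a1 + a2 + c) (hD1 : 1 ≤ d) (hB1 : 1 ≤ b) :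
    2*b < a1 + a2 + (b - d + 1)^2 / (a1+a2) := by
  have hA : a1+a2 = b - c := by linarith
  have hmain : 2*b*(b-c) < (b-c)^2 + (b-d+1)^2 := by
    nlinarith [hkey, sq_nonneg (d-1)]
  have h2 : 2*b*(a1+a2) < (a1+a2)^2 + (b-d+1)^2 := by rw [hA]; exact hmain
  rw [← sub_lt_iff_lt_add', lt_div_iff₀ hApos]
  nlinarith [h2]

set_option maxHeartbeats 1000000 in
theorem stmt_11 (n k : ℕ) (hk : 8 ≤ k) (hn1 : 2 * k + 1 ≤ n) (hn2 : n ≤ 4 * k) :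
    ((n - 2).choose (k - 2) : ℝ) + (n - 4).choose (k - 2)
        + (((n - 1).choose (k - 1) - (n - k - 1).choose (k - 1) + 1 : ℕ) : ℝ) ^ 2
          / (((n - 2).choose (k - 2) : ℝ) + (n - 4).choose (k - 2))
      > 2 * (n - 1).choose (k - 1) := by
  obtain ⟨j, rfl⟩ : ∃ j, k = j + 8 := ⟨k - 8, by omega⟩
  obtain ⟨M, rfl⟩ : ∃ M, n = M + (2*j+17) := ⟨n - (2*j+17), by omega⟩
  have hM : M ≤ 2*j+15 := by omega
  simp only [show M + (2*j+17) - 1 = M+2*j+16 from by omega,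
    show M + (2*j+17) - 2 = M+2*j+15 from by omega,
    show M + (2*j+17) - 4 = M+2*j+13 from by omega,
    show j+8-1 = j+7 from by omega, show j+8-2 = j+6 from by omega,
    show M + (2*j+17) - (j+8) = M+j+9 from by omega,
    show M+j+9-1 = M+j+8 from by omega]
  set A1 := (M+2*j+15).choose (j+6) with hA1def
  set A2 := (M+2*j+13).choose (j+6) with hA2def
  set B := (M+2*j+16).choose (j+7) with hBdef
  set D := (M+j+8).choose (j+7) with hDdef
  have hDx8 : D ≤ (M+2*j+8).choose (j+7) := Nat.choose_le_choose _ (by omega)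
  have hDB : D ≤ B := le_trans hDx8 (Nat.choose_le_choose _ (by omega))
  have hD1 : 1 ≤ D := Nat.choose_pos (by omega)
  have hA1pos : 1 ≤ A1 := Nat.choose_pos (by omega)
  have p1 : B = A1 + (M+2*j+15).choose (j+7) := by
    have h := Nat.choose_succ_succ' (M+2*j+15) (j+6)
    rw [show M+2*j+15+1 = M+2*j+16 from by omega, show j+6+1 = j+7 from by omega] at h
    exact h
  have p2 : (M+2*j+15).choose (j+7) = (M+2*j+14).choose (j+6) + (M+2*j+14).choose (j+7) := by
    have h := Nat.choose_succ_succ' (M+2*j+14) (j+6)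
    rw [show M+2*j+14+1 = M+2*j+15 from by omega, show j+6+1 = j+7 from by omega] at h
    exact h
  have p3 : (M+2*j+14).choose (j+6) = (M+2*j+13).choose (j+5) + A2 := by
    have h := Nat.choose_succ_succ' (M+2*j+13) (j+5)
    rw [show M+2*j+13+1 = M+2*j+14 from by omega, show j+5+1 = j+6 from by omega] at h
    exact h
  set Cc := (M+2*j+13).choose (j+5) + (M+2*j+14).choose (j+7) with hCcdef
  have hBsum : B = A1 + A2 + Cc := by omega
  have hCx : (M+2*j+14).choose (j+7) ≤ Cc := by omega
  have kk := kreal M j hM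
  have hkey : 2*(D:ℝ)*(B:ℝ) ≤ (Cc:ℝ)^2 :=
    hkey_abs _ _ _ _ _ (by exact_mod_cast hDx8) (by exact_mod_cast hCx)
      (Nat.cast_nonneg _) (Nat.cast_nonneg _) (Nat.cast_nonneg _) kk
  have hApos : (0:ℝ) < (A1:ℝ) + (A2:ℝ) := by
    have h1 : (1:ℝ) ≤ (A1:ℝ) := by exact_mod_cast hA1pos
    have h2 : (0:ℝ) ≤ (A2:ℝ) := Nat.cast_nonneg _
    linarith
  have hH : ((B - D + 1 : ℕ):ℝ) = (B:ℝ) - (D:ℝ) + 1 := by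
    push_cast [hDB]
    ring
  rw [hH, gt_iff_lt]
  exact final_abs _ _ _ _ _ hApos hkey (by exact_mod_cast hBsum)
    (by exact_mod_cast hD1) (by exact_mod_cast (le_trans hD1 hDB))
end

section
/- For k ≥ 8 and 3k ≤ n ≤ 4k, with h(n,k) = C(n-1,k-1) - C(n-k-1,k-1) + 1, the inequality C(n,k-2) + h(n,k)^2/C(n,k-2) > 2·C(n-1,k-1) holds. -/
private lemma aux_div (x y w : ℝ) (hx : 0 < x) (key : 2*y*x < x*x + w*w) :
    x + w^2/x > 2*y := by
  rw [gt_iff_lt, ← sub_pos]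
  have h : x + w^2/x - 2*y = (x*x + w*w - 2*y*x)/x := by field_simp
  rw [h]; exact div_pos (by linarith) hx

private lemma red (n k : ℕ) (hk : 8 ≤ k) (hn1 : 3 * k ≤ n)
    (key : 2 * ((n-1).choose (k-1)) * (n.choose (k-2)) <
      n.choose (k-2) * n.choose (k-2) +
      ((n-1).choose (k-1) - (n-k-1).choose (k-1) + 1) *
      ((n-1).choose (k-1) - (n-k-1).choose (k-1) + 1)) :
    (n.choose (k - 2) : ℝ)
        + (((n - 1).choose (k - 1) - (n - k - 1).choose (k - 1) + 1 : ℕ) : ℝ) ^ 2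
          / (n.choose (k - 2) : ℝ)
      > 2 * (n - 1).choose (k - 1) := by
  have hC : 0 < n.choose (k-2) := Nat.choose_pos (by omega)
  have hx : (0:ℝ) < n.choose (k-2) := by exact_mod_cast hC
  apply aux_div _ _ _ hx
  exact_mod_cast key

private lemma ratio_step (k m : ℕ) (hk : 8 ≤ k) (hm : k - 1 ≤ m) (hm2 : m + 1 ≤ 4*k - 1) :
    (4*k-1) * m.choose (k-1) ≤ 3*k * ((m+1).choose (k-1)) := by
  have hd : 0 < m + 1 - (k-1) := by omega
  apply Nat.le_of_mul_le_mul_right _ hd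
  have id1 := Nat.choose_mul_succ_eq m (k-1)
  have hscal : (4*k-1) * (m + 1 - (k-1)) ≤ 3*k*(m+1) := by
    obtain ⟨e, rfl⟩ := Nat.exists_eq_add_of_le hm
    obtain ⟨K, rfl⟩ := Nat.exists_eq_add_of_le hk
    have h1 : (8+K-1) + e + 1 - (8+K-1) = e + 1 := by omega
    have h2 : 4*(8+K)-1 = 31 + 4*K := by omega
    have h3 : 8+K-1 = 7+K := by omega
    rw [h1, h2, h3]
    have he : e + 1 ≤ 3*(8+K) := by omega
    nlinarith [he]
  calc (4*k-1) * m.choose (k-1) * (m + 1 - (k-1))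
      = (4*k-1) * (m + 1 - (k-1)) * m.choose (k-1) := by ring
    _ ≤ 3*k*(m+1) * m.choose (k-1) := Nat.mul_le_mul_right _ hscal
    _ = 3*k * (m.choose (k-1) * (m+1)) := by ring
    _ = 3*k * ((m+1).choose (k-1) * (m + 1 - (k-1))) := by rw [id1]
    _ = 3*k * ((m+1).choose (k-1)) * (m + 1 - (k-1)) := by ring

private lemma ratio_pow (n k : ℕ) (hk : 8 ≤ k) (hn1 : 3*k ≤ n) (hn2 : n ≤ 4*k) :
    ∀ j, j ≤ k → (4*k-1)^j * (n-k-1).choose (k-1) ≤ (3*k)^j * ((n-k-1+j).choose (k-1))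
  | 0, _ => by simp
  | (j+1), hj => by
    have ih := ratio_pow n k hk hn1 hn2 j (by omega)
    have hstep := ratio_step k (n-k-1+j) hk (by omega) (by omega)
    calc (4*k-1)^(j+1) * (n-k-1).choose (k-1)
        = (4*k-1) * ((4*k-1)^j * (n-k-1).choose (k-1)) := by ring
      _ ≤ (4*k-1) * ((3*k)^j * ((n-k-1+j).choose (k-1))) := Nat.mul_le_mul_left _ ih
      _ = (3*k)^j * ((4*k-1) * (n-k-1+j).choose (k-1)) := by ring
      _ ≤ (3*k)^j * (3*k * ((n-k-1+j+1).choose (k-1))) := Nat.mul_le_mul_left _ hstep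
      _ = (3*k)^(j+1) * ((n-k-1+(j+1)).choose (k-1)) := by ring_nf

private lemma pow3251 : ∀ k, 13 ≤ k → 32 * 39^k ≤ 51^k := by
  intro k hk
  induction k, hk using Nat.le_induction with
  | base => norm_num
  | succ j hj ih =>
    calc 32 * 39^(j+1) = 39 * (32 * 39^j) := by ring
      _ ≤ 39 * 51^j := Nat.mul_le_mul_left _ ih
      _ ≤ 51 * 51^j := Nat.mul_le_mul_right _ (by norm_num)
      _ = 51^(j+1) := by ring

private lemma b32 (n k : ℕ) (hk : 13 ≤ k) (hn1 : 3*k ≤ n) (hn2 : n ≤ 4*k) :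
    32 * (n-k-1).choose (k-1) ≤ (n-1).choose (k-1) := by
  have hk8 : 8 ≤ k := by omega
  have H := ratio_pow n k hk8 hn1 hn2 k le_rfl
  rw [show n-k-1+k = n-1 by omega] at H
  set a := (n-k-1).choose (k-1)
  set b := (n-1).choose (k-1)
  have h51 : (51*k)^k * a ≤ (39*k)^k * b := by
    calc (51*k)^k * a ≤ (13*(4*k-1))^k * a := by
          apply Nat.mul_le_mul_right
          exact Nat.pow_le_pow_left (by omega) k
      _ = 13^k * ((4*k-1)^k * a) := by rw [mul_pow]; ring
      _ ≤ 13^k * ((3*k)^k * b) := Nat.mul_le_mul_left _ H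
      _ = (39*k)^k * b := by rw [show (39:ℕ)*k = 13*(3*k) by ring, mul_pow, mul_pow]; ring
  have hkpos : 0 < k^k := Nat.pow_pos (by omega)
  have h51' : 51^k * a ≤ 39^k * b := by
    apply Nat.le_of_mul_le_mul_right _ hkpos
    calc 51^k * a * k^k = (51*k)^k * a := by rw [mul_pow]; ring
      _ ≤ (39*k)^k * b := h51
      _ = 39^k * b * k^k := by rw [mul_pow]; ring
  have h32 := pow3251 k hk
  have : 32 * a * 39^k ≤ b * 39^k := by
    calc 32 * a * 39^k = a * (32 * 39^k) := by ring
      _ ≤ a * 51^k := Nat.mul_le_mul_left _ h32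
      _ = 51^k * a := by ring
      _ ≤ 39^k * b := h51'
      _ = b * 39^k := by ring
  exact Nat.le_of_mul_le_mul_right this (Nat.pow_pos (by norm_num))

private lemma Cbound (n k : ℕ) (hk : 8 ≤ k) (hn1 : 3*k ≤ n) :
    4 * (n.choose (k-2)) ≤ 3 * ((n-1).choose (k-1)) := by
  have e1 : n.choose (k-1) * (k-1) = n.choose (k-2) * (n-k+2) := by
    have := Nat.choose_succ_right_eq n (k-2)
    rw [show k-2+1 = k-1 by omega, show n - (k-2) = n-k+2 by omega] at this
    exact this
  have e2 : (n-1).choose (k-1) * n = n.choose (k-1) * (n-k+1) := by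
    have := Nat.choose_mul_succ_eq (n-1) (k-1)
    rw [show n-1+1 = n by omega, show n - (k-1) = n-k+1 by omega] at this
    exact this
  have hscal : 4 * n * (k-1) ≤ 3 * ((n-k+1) * (n-k+2)) := by
    obtain ⟨m, rfl⟩ := Nat.exists_eq_add_of_le hn1
    obtain ⟨K, rfl⟩ := Nat.exists_eq_add_of_le hk
    have h0 : 8+K-1 = 7+K := by omega
    have h1 : 3*(8+K)+m-(8+K)+1 = 2*(8+K)+m+1 := by omega
    have h2 : 3*(8+K)+m-(8+K)+2 = 2*(8+K)+m+2 := by omega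
    rw [h0, h1, h2]
    nlinarith [sq_nonneg K, sq_nonneg m]
  have hd : 0 < (n-k+1) * (n-k+2) := by positivity
  apply Nat.le_of_mul_le_mul_right _ hd
  calc 4 * n.choose (k-2) * ((n-k+1)*(n-k+2))
      = 4 * (n-k+1) * (n.choose (k-2) * (n-k+2)) := by ring
    _ = 4 * (n-k+1) * (n.choose (k-1) * (k-1)) := by rw [e1]
    _ = 4 * (k-1) * (n.choose (k-1) * (n-k+1)) := by ring
    _ = 4 * (k-1) * ((n-1).choose (k-1) * n) := by rw [e2]
    _ = (4 * n * (k-1)) * ((n-1).choose (k-1)) := by ring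
    _ ≤ (3 * ((n-k+1)*(n-k+2))) * ((n-1).choose (k-1)) := Nat.mul_le_mul_right _ hscal
    _ = 3 * ((n-1).choose (k-1)) * ((n-k+1)*(n-k+2)) := by ring

private lemma key_big (n k : ℕ) (hk : 13 ≤ k) (hn1 : 3*k ≤ n) (hn2 : n ≤ 4*k) :
    2 * ((n-1).choose (k-1)) * (n.choose (k-2)) <
      n.choose (k-2) * n.choose (k-2) +
      ((n-1).choose (k-1) - (n-k-1).choose (k-1) + 1) *
      ((n-1).choose (k-1) - (n-k-1).choose (k-1) + 1) := by
  have hk8 : 8 ≤ k := by omega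
  have hab : (n-k-1).choose (k-1) ≤ (n-1).choose (k-1) :=
    Nat.choose_le_choose _ (by omega)
  have hz : 1 ≤ (((n-k-1).choose (k-1) : ℕ) : ℤ) := by
    have : 0 < (n-k-1).choose (k-1) := Nat.choose_pos (by omega)
    exact_mod_cast this
  have hzy : (((n-k-1).choose (k-1) : ℕ) : ℤ) ≤ ((n-1).choose (k-1) : ℕ) := by
    exact_mod_cast hab
  have h1 : 4*((n.choose (k-2) : ℕ) : ℤ) ≤ 3*((n-1).choose (k-1) : ℕ) := by
    exact_mod_cast Cbound n k hk8 hn1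
  have h2 : 32*(((n-k-1).choose (k-1) : ℕ) : ℤ) ≤ ((n-1).choose (k-1) : ℕ) := by
    exact_mod_cast b32 n k hk hn1 hn2
  have hx : (0:ℤ) ≤ ((n.choose (k-2) : ℕ) : ℤ) := by positivity
  zify [hab]
  nlinarith [sq_nonneg (((n.choose (k-2):ℕ):ℤ) - ((n-1).choose (k-1):ℕ)),
    sq_nonneg ((((n-k-1).choose (k-1):ℕ):ℤ) - 1)]

theorem stmt_12 (n k : ℕ) (hk : 8 ≤ k) (hn1 : 3 * k ≤ n) (hn2 : n ≤ 4 * k) :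
    (n.choose (k - 2) : ℝ)
        + (((n - 1).choose (k - 1) - (n - k - 1).choose (k - 1) + 1 : ℕ) : ℝ) ^ 2
          / (n.choose (k - 2) : ℝ)
      > 2 * (n - 1).choose (k - 1) := by
  apply red n k hk hn1
  rcases Nat.lt_or_ge k 13 with hsmall | hbig
  · interval_cases k <;> interval_cases n <;>
      (simp only [Nat.choose_eq_descFactorial_div_factorial]; decide)
  · exact key_big n k hbig hn1 hn2
end

section
/- Let n = ck+1 where c is an integer with 2 ≤ c ≤ 4 and k ≥ 8. Set x = (k-1)/(n-1) + (k-1)(n-k)(n-k-1)/((n-1)(n-2)(n-3)). Then 1 - x > 1/4, and consequently x(2-x) ≤ 15/16. -/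
private lemma aux_frac (A B C D : ℝ) (hB : 0 < B) (hD : 0 < D)
    (h : A * D + C * B < 3 / 4 * (B * D)) : A / B + C / D < 3 / 4 := by
  rw [div_add_div _ _ hB.ne' hD.ne', div_lt_iff₀ (mul_pos hB hD)]
  linarith

theorem stmt_16 (c k n : ℕ) (hc1 : 2 ≤ c) (hc2 : c ≤ 4) (hk : 8 ≤ k)
    (hn : n = c * k + 1)
    (x : ℝ) (hx : x = ((k : ℝ) - 1) / ((n : ℝ) - 1)
        + ((k : ℝ) - 1) * ((n : ℝ) - k) * ((n : ℝ) - k - 1)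
          / (((n : ℝ) - 1) * ((n : ℝ) - 2) * ((n : ℝ) - 3))) :
    1 - x > 1 / 4 ∧ x * (2 - x) ≤ 15 / 16 := by
  have hK : (8:ℝ) ≤ (k:ℝ) := by exact_mod_cast hk
  set K := (k:ℝ) with hKdef
  have hx34 : x < 3/4 := by
    subst hn hx
    interval_cases c <;> push_cast <;>
      refine aux_frac _ _ _ _ (by nlinarith) (by nlinarith [hK, sq_nonneg K, mul_nonneg (by linarith : (0:ℝ) ≤ K - 8) (sq_nonneg K), mul_nonneg (by linarith : (0:ℝ) ≤ K - 8) (by linarith : (0:ℝ) ≤ K)]) (by nlinarith [sq_nonneg K, sq_nonneg (K-8), mul_nonneg (sq_nonneg (K-8)) (by linarith : (0:ℝ) ≤ K)])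
  refine ⟨by linarith, ?_⟩
  nlinarith [hx34]
end
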